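/- (Portmanteau-based asymptotic control, Remark 4.2) Let (X_n) be a sequence of random vectors in [0,1]^t that is tight, and suppose along every subsequence there is a further subsequence converging in distribution to some limit X whose coordinates satisfy P(Xᵢ ≤ u) ≤ u for u ∈ (0,1). Let C = ⋃_{k=1}^{t} {x ∈ [0,1]^t : x₍ₖ₎ ≤ βₖ} for nondecreasing constants 0 ≤ β₁ ≤ ⋯ ≤ βₜ, where x₍ₖ₎ is the k-th smallest coordinate of x. Then limsup_n P(X_n ∈ C) ≤ t·Σ_{k=1}^{t} (βₖ - βₖ₋₁)/k (with β₀ = 0). -/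

import Mathlib

open MeasureTheory Finset
open scoped Classical ENNReal NNReal

/-- `orderStat p k` is the `k`-th smallest value (1-indexed) among `p 0, …, p (n-1)`. -/
noncomputable def orderStat {n : ℕ} (p : Fin n → ℝ) (k : ℕ) : ℝ :=
  if h : k - 1 < n then p (Tuple.sort p ⟨k - 1, h⟩) else 0

lemma orderStat_le_iff {t : ℕ} (x : Fin t → ℝ) (c : ℝ) (k : ℕ) (hk1 : 1 ≤ k) (hkt : k ≤ t) :
    orderStat x k ≤ c ↔ k ≤ (Finset.univ.filter fun i => x i ≤ c).card := by
  have hlt : k - 1 < t := by omega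
  rw [orderStat, dif_pos hlt]
  set σ := Tuple.sort x with hσ
  constructor
  · intro h
    have hsub : (Finset.Iic (⟨k-1, hlt⟩ : Fin t)).image σ ⊆
        Finset.univ.filter fun i => x i ≤ c := by
      intro i hi
      simp only [Finset.mem_image, Finset.mem_Iic] at hi
      obtain ⟨j, hj, rfl⟩ := hi
      simp only [Finset.mem_filter, Finset.mem_univ, true_and]
      exact le_trans (Tuple.monotone_sort x hj) h
    calc k = (Finset.Iic (⟨k-1, hlt⟩ : Fin t)).card := by rw [Fin.card_Iic]; simp; omega
    _ = ((Finset.Iic (⟨k-1, hlt⟩ : Fin t)).image σ).card :=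
        (Finset.card_image_of_injective _ σ.injective).symm
    _ ≤ _ := Finset.card_le_card hsub
  · intro h
    by_contra hc
    push_neg at hc
    have hsub : (Finset.univ.filter fun i => x i ≤ c).image σ.symm ⊆
        Finset.Iio (⟨k-1, hlt⟩ : Fin t) := by
      intro j hj
      simp only [Finset.mem_image, Finset.mem_filter, Finset.mem_univ, true_and] at hj
      obtain ⟨i, hi, rfl⟩ := hj
      rw [Finset.mem_Iio]
      by_contra hge
      push_neg at hge
      have hmono := Tuple.monotone_sort x hge
      simp only [Function.comp_apply, ← hσ, Equiv.apply_symm_apply] at hmono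
      exact absurd (le_trans hmono hi) (not_le.mpr hc)
    have := Finset.card_le_card hsub
    rw [Finset.card_image_of_injective _ σ.symm.injective, Fin.card_Iio] at this
    simp at this
    omega

lemma isClosed_count {t : ℕ} (c : ℝ) (k : ℕ) :
    IsClosed {x : Fin t → ℝ | k ≤ (Finset.univ.filter fun i => x i ≤ c).card} := by
  have heq : {x : Fin t → ℝ | k ≤ (Finset.univ.filter fun i => x i ≤ c).card} =
      ⋃ S ∈ {S : Finset (Fin t) | k ≤ S.card}, ⋂ i ∈ S, {x : Fin t → ℝ | x i ≤ c} := by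
    ext x
    simp only [Set.mem_setOf_eq, Set.mem_iUnion, Set.mem_iInter, exists_prop]
    constructor
    · intro h
      exact ⟨Finset.univ.filter fun i => x i ≤ c, h, fun i hi => (Finset.mem_filter.mp hi).2⟩
    · rintro ⟨S, hS, hx⟩
      refine hS.trans (Finset.card_le_card fun i hi => ?_)
      exact Finset.mem_filter.mpr ⟨Finset.mem_univ i, hx i hi⟩
  rw [heq]
  exact (Set.toFinite _).isClosed_biUnion fun S _ =>
    isClosed_biInter fun i _ => isClosed_le (continuous_apply i) continuous_const

lemma abel_aux (c F b : ℕ → ℝ) (t : ℕ) (hc : ∀ k < t, c (k+1) ≤ c k) (hct : 0 ≤ c t)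
    (hFb : ∀ k ≤ t, F k ≤ b k) (h0 : F 0 = b 0) :
    ∑ k ∈ Finset.Icc 1 t, c k * (F k - F (k-1)) ≤
      ∑ k ∈ Finset.Icc 1 t, c k * (b k - b (k-1)) - c t * (b t - F t) := by
  induction t with
  | zero => simp [h0]
  | succ n ih =>
    have hbn : F n ≤ b n := hFb n (Nat.le_succ n)
    have hcn : c (n+1) ≤ c n := hc n (Nat.lt_succ_self n)
    have hcn0 : 0 ≤ c n := hct.trans hcn
    have ih' := ih (fun k hk => hc k (hk.trans (Nat.lt_succ_self n))) hcn0
      (fun k hk => hFb k (hk.trans (Nat.le_succ n)))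
    rw [Finset.sum_Icc_succ_top (Nat.le_add_left 1 n), Finset.sum_Icc_succ_top (Nat.le_add_left 1 n)]
    simp only [Nat.add_sub_cancel]
    nlinarith [hFb (n+1) le_rfl, (c n - c (n+1)) * (b n - F n)]

lemma isClosed_C {t : ℕ} (β : ℕ → ℝ) :
    IsClosed {x : Fin t → ℝ | (∀ i, x i ∈ Set.Icc (0:ℝ) 1) ∧
      ∃ k ∈ Finset.Icc 1 t, orderStat x k ≤ β k} := by
  have heq : {x : Fin t → ℝ | (∀ i, x i ∈ Set.Icc (0:ℝ) 1) ∧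
      ∃ k ∈ Finset.Icc 1 t, orderStat x k ≤ β k}
      = {x : Fin t → ℝ | ∀ i, x i ∈ Set.Icc (0:ℝ) 1} ∩
        ⋃ k ∈ Finset.Icc 1 t,
          {x : Fin t → ℝ | k ≤ (Finset.univ.filter fun i => x i ≤ β k).card} := by
    ext x
    simp only [Set.mem_inter_iff, Set.mem_setOf_eq, Set.mem_iUnion, exists_prop, Finset.mem_Icc]
    constructor
    · rintro ⟨hx, k, hk, hok⟩
      exact ⟨hx, k, hk, (orderStat_le_iff x (β k) k hk.1 hk.2).mp hok⟩
    · rintro ⟨hx, k, hk, hok⟩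
      exact ⟨hx, k, hk, (orderStat_le_iff x (β k) k hk.1 hk.2).mpr hok⟩
  rw [heq]
  refine IsClosed.inter ?_ ?_
  · rw [Set.setOf_forall]
    exact isClosed_iInter fun i => isClosed_Icc.preimage (continuous_apply i)
  · exact (Finset.Icc 1 t).finite_toSet.isClosed_biUnion fun k _ => isClosed_count _ _

lemma hommel {t : ℕ} (ν : ProbabilityMeasure (Fin t → ℝ))
    (hν : ∀ i : Fin t, ∀ u ∈ Set.Ioo (0:ℝ) 1,
      (ν : Measure (Fin t → ℝ)) {x | x i ≤ u} ≤ ENNReal.ofReal u)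
    (β : ℕ → ℝ) (hβ0 : β 0 = 0) (hβmono : ∀ i j, i ≤ j → j ≤ t → β i ≤ β j) (hβ1 : β t ≤ 1) :
    ((ν : Measure (Fin t → ℝ)) {x | (∀ i, x i ∈ Set.Icc (0:ℝ) 1) ∧
        ∃ k ∈ Finset.Icc 1 t, orderStat x k ≤ β k}).toReal ≤
      t * ∑ k ∈ Finset.Icc 1 t, (β k - β (k-1)) / k := by
  set μm := (ν : Measure (Fin t → ℝ)) with hμm
  have hm : ∀ (i : Fin t) (r : ℝ), MeasurableSet {x : Fin t → ℝ | x i ≤ r} :=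
    fun i r => measurableSet_le (measurable_pi_apply i) measurable_const
  have hI : ∀ (i : Fin t) (k : ℕ),
      MeasurableSet {x : Fin t → ℝ | β (k-1) < x i ∧ x i ≤ β k} :=
    fun i k => (measurableSet_lt measurable_const (measurable_pi_apply i)).inter
      (hm i (β k))
  -- the coordinates are a.s. positive
  have hzero : ∀ i : Fin t, μm {x | x i ≤ (0:ℝ)} = 0 := by
    intro i
    refine le_antisymm ?_ (zero_le)
    refine ENNReal.le_of_forall_pos_le_add fun ε hε _ => ?_
    have hu : (min ((ε:ℝ)/2) (1/2)) ∈ Set.Ioo (0:ℝ) 1 := by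
      constructor
      · have : (0:ℝ) < (ε:ℝ) := by exact_mod_cast hε
        simp only [lt_min_iff]
        constructor <;> linarith
      · calc min ((ε:ℝ)/2) (1/2) ≤ 1/2 := min_le_right _ _
        _ < 1 := by norm_num
    calc μm {x | x i ≤ 0} ≤ μm {x | x i ≤ min ((ε:ℝ)/2) (1/2)} :=
          measure_mono (fun x hx => le_trans hx hu.1.le)
    _ ≤ ENNReal.ofReal (min ((ε:ℝ)/2) (1/2)) := hν i _ hu
    _ ≤ 0 + (ε : ℝ≥0∞) := by
        rw [zero_add, ← ENNReal.ofReal_coe_nnreal]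
        apply ENNReal.ofReal_le_ofReal
        calc min ((ε:ℝ)/2) (1/2) ≤ (ε:ℝ)/2 := min_le_left _ _
        _ ≤ (ε:ℝ) := by linarith [ε.coe_nonneg]
  set C := {x : Fin t → ℝ | (∀ i, x i ∈ Set.Icc (0:ℝ) 1) ∧
      ∃ k ∈ Finset.Icc 1 t, orderStat x k ≤ β k} with hC
  have hCmeas : MeasurableSet C := (isClosed_C β).measurableSet
  have hposmeas : MeasurableSet {x : Fin t → ℝ | ∀ i, 0 < x i} := by
    rw [Set.setOf_forall]
    exact MeasurableSet.iInter fun i => measurableSet_lt measurable_const (measurable_pi_apply i)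
  set C' := C ∩ {x : Fin t → ℝ | ∀ i, 0 < x i} with hC'
  have hC'meas : MeasurableSet C' := hCmeas.inter hposmeas
  have hCC' : μm C ≤ μm C' := by
    have hsub : C ⊆ C' ∪ ⋃ i : Fin t, {x : Fin t → ℝ | x i ≤ 0} := by
      intro x hx
      by_cases hp : ∀ i, 0 < x i
      · exact Or.inl ⟨hx, hp⟩
      · push_neg at hp
        obtain ⟨i, hi⟩ := hp
        exact Or.inr (Set.mem_iUnion.mpr ⟨i, hi⟩)
    calc μm C ≤ μm (C' ∪ ⋃ i, {x : Fin t → ℝ | x i ≤ 0}) := measure_mono hsub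
    _ ≤ μm C' + μm (⋃ i, {x : Fin t → ℝ | x i ≤ 0}) := measure_union_le _ _
    _ = μm C' := by rw [measure_iUnion_null (fun i => hzero i), add_zero]
  have key : μm C' ≤ ∑ i : Fin t, ∑ k ∈ Finset.Icc 1 t,
      (k : ℝ≥0∞)⁻¹ * μm {x : Fin t → ℝ | β (k-1) < x i ∧ x i ≤ β k} := by
    have hpt : ∀ x, C'.indicator (fun _ => (1:ℝ≥0∞)) x ≤
        ∑ i : Fin t, ∑ k ∈ Finset.Icc 1 t,
          Set.indicator {y : Fin t → ℝ | β (k-1) < y i ∧ y i ≤ β k}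
            (fun _ => (k : ℝ≥0∞)⁻¹) x := by
      intro x
      by_cases hx : x ∈ C'
      swap
      · rw [Set.indicator_of_notMem hx]
        exact zero_le
      rw [Set.indicator_of_mem hx]
      obtain ⟨⟨hcube, k₀, hk₀, hord⟩, hpos⟩ := hx
      rw [Finset.mem_Icc] at hk₀
      have hcount := (orderStat_le_iff x (β k₀) k₀ hk₀.1 hk₀.2).mp hord
      obtain ⟨S, hSsub, hScard⟩ := Finset.exists_subset_card_eq hcount
      have hstep : ∀ i ∈ S, (k₀ : ℝ≥0∞)⁻¹ ≤
          ∑ k ∈ Finset.Icc 1 t, Set.indicator {y : Fin t → ℝ | β (k-1) < y i ∧ y i ≤ β k}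
            (fun _ => (k : ℝ≥0∞)⁻¹) x := by
        intro i hiS
        have hik : x i ≤ β k₀ := (Finset.mem_filter.mp (hSsub hiS)).2
        have hex : ∃ j, x i ≤ β j := ⟨k₀, hik⟩
        have hjle : Nat.find hex ≤ k₀ := Nat.find_le hik
        set j := Nat.find hex with hj
        have hjs : x i ≤ β j := Nat.find_spec hex
        have hj0 : 1 ≤ j := by
          rcases Nat.eq_zero_or_pos j with h | h
          · exfalso
            rw [h, hβ0] at hjs
            exact absurd hjs (not_le.mpr (hpos i))
          · exact h
        have hjt : j ≤ t := hjle.trans hk₀.2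
        have hgt : β (j-1) < x i := by
          have hmin := Nat.find_min hex (show j - 1 < j by omega)
          exact lt_of_not_ge hmin
        have hmem : x ∈ {y : Fin t → ℝ | β (j-1) < y i ∧ y i ≤ β j} := ⟨hgt, hjs⟩
        calc (k₀ : ℝ≥0∞)⁻¹ ≤ (j : ℝ≥0∞)⁻¹ :=
              ENNReal.inv_le_inv' (by exact_mod_cast hjle)
        _ = Set.indicator {y : Fin t → ℝ | β (j-1) < y i ∧ y i ≤ β j}
              (fun _ => (j : ℝ≥0∞)⁻¹) x := (Set.indicator_of_mem hmem (fun _ => (j : ℝ≥0∞)⁻¹)).symm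
        _ ≤ _ := Finset.single_le_sum (f := fun k => Set.indicator
              {y : Fin t → ℝ | β (k-1) < y i ∧ y i ≤ β k} (fun _ => (k : ℝ≥0∞)⁻¹) x)
              (fun _ _ => zero_le) (Finset.mem_Icc.mpr ⟨hj0, hjt⟩)
      have hk₀0 : (k₀ : ℝ≥0∞) ≠ 0 := Nat.cast_ne_zero.mpr (by omega)
      calc (1:ℝ≥0∞) = (k₀ : ℝ≥0∞) * (k₀ : ℝ≥0∞)⁻¹ :=
            (ENNReal.mul_inv_cancel hk₀0 (ENNReal.natCast_ne_top _)).symm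
      _ = ∑ _i ∈ S, (k₀ : ℝ≥0∞)⁻¹ := by
            rw [Finset.sum_const, hScard, nsmul_eq_mul]
      _ ≤ ∑ i ∈ S, ∑ k ∈ Finset.Icc 1 t,
            Set.indicator {y : Fin t → ℝ | β (k-1) < y i ∧ y i ≤ β k}
              (fun _ => (k : ℝ≥0∞)⁻¹) x := Finset.sum_le_sum hstep
      _ ≤ _ := Finset.sum_le_sum_of_subset (S.subset_univ)
    calc μm C' = ∫⁻ x, C'.indicator (fun _ => (1:ℝ≥0∞)) x ∂μm := by
          rw [lintegral_indicator_const hC'meas, one_mul]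
    _ ≤ ∫⁻ x, ∑ i : Fin t, ∑ k ∈ Finset.Icc 1 t,
          Set.indicator {y : Fin t → ℝ | β (k-1) < y i ∧ y i ≤ β k}
            (fun _ => (k : ℝ≥0∞)⁻¹) x ∂μm := lintegral_mono hpt
    _ = ∑ i : Fin t, ∑ k ∈ Finset.Icc 1 t,
          (k : ℝ≥0∞)⁻¹ * μm {x : Fin t → ℝ | β (k-1) < x i ∧ x i ≤ β k} := by
        rw [lintegral_finset_sum _ (fun i _ => Finset.measurable_sum _
          (fun k _ => measurable_const.indicator (hI i k)))]
        refine Finset.sum_congr rfl fun i _ => ?_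
        rw [lintegral_finset_sum _ (fun k _ => measurable_const.indicator (hI i k))]
        exact Finset.sum_congr rfl fun k _ => lintegral_indicator_const (hI i k) _
  -- pass to real numbers
  have hterm_ne : ∀ (i : Fin t), ∀ k ∈ Finset.Icc 1 t,
      (k : ℝ≥0∞)⁻¹ * μm {x : Fin t → ℝ | β (k-1) < x i ∧ x i ≤ β k} ≠ ∞ := by
    intro i k hk
    rw [Finset.mem_Icc] at hk
    exact ENNReal.mul_ne_top (ENNReal.inv_ne_top.mpr (Nat.cast_ne_zero.mpr (by omega)))
      (measure_ne_top _ _)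
  have h1 : (μm C).toReal ≤ ∑ i : Fin t, ∑ k ∈ Finset.Icc 1 t,
      ((k:ℝ))⁻¹ * (μm {x : Fin t → ℝ | β (k-1) < x i ∧ x i ≤ β k}).toReal := by
    have hsum_ne : (∑ i : Fin t, ∑ k ∈ Finset.Icc 1 t,
        (k : ℝ≥0∞)⁻¹ * μm {x : Fin t → ℝ | β (k-1) < x i ∧ x i ≤ β k}) ≠ ∞ := by
      apply (ENNReal.sum_lt_top.mpr ?_).ne
      intro i _
      exact ENNReal.sum_lt_top.mpr fun k hk => (hterm_ne i k hk).lt_top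
    calc (μm C).toReal ≤ (∑ i : Fin t, ∑ k ∈ Finset.Icc 1 t,
        (k : ℝ≥0∞)⁻¹ * μm {x : Fin t → ℝ | β (k-1) < x i ∧ x i ≤ β k}).toReal :=
          ENNReal.toReal_mono hsum_ne (hCC'.trans key)
    _ = ∑ i : Fin t, ∑ k ∈ Finset.Icc 1 t,
        ((k:ℝ))⁻¹ * (μm {x : Fin t → ℝ | β (k-1) < x i ∧ x i ≤ β k}).toReal := by
        rw [ENNReal.toReal_sum (fun i _ => (ENNReal.sum_lt_top.mpr
          fun k hk => (hterm_ne i k hk).lt_top).ne)]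
        refine Finset.sum_congr rfl fun i _ => ?_
        rw [ENNReal.toReal_sum (fun k hk => hterm_ne i k hk)]
        refine Finset.sum_congr rfl fun k _ => ?_
        rw [ENNReal.toReal_mul, ENNReal.toReal_inv]
        norm_num
  -- per-coordinate Abel bound
  have h2 : ∀ i : Fin t, ∑ k ∈ Finset.Icc 1 t,
      ((k:ℝ))⁻¹ * (μm {x : Fin t → ℝ | β (k-1) < x i ∧ x i ≤ β k}).toReal ≤
      ∑ k ∈ Finset.Icc 1 t, (β k - β (k-1)) / k := by
    intro i
    set F : ℕ → ℝ := fun k => (μm {x : Fin t → ℝ | x i ≤ β k}).toReal with hF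
    set c : ℕ → ℝ := fun k => if k = 0 then 1 else ((k:ℝ))⁻¹ with hc
    have hdiff : ∀ k ∈ Finset.Icc 1 t,
        (μm {x : Fin t → ℝ | β (k-1) < x i ∧ x i ≤ β k}).toReal = F k - F (k-1) := by
      intro k hk
      rw [Finset.mem_Icc] at hk
      have hsub : {x : Fin t → ℝ | x i ≤ β (k-1)} ⊆ {x : Fin t → ℝ | x i ≤ β k} :=
        fun x hx => le_trans hx (hβmono (k-1) k (by omega) hk.2)
      have hseteq : {x : Fin t → ℝ | β (k-1) < x i ∧ x i ≤ β k}
          = {x : Fin t → ℝ | x i ≤ β k} \ {x : Fin t → ℝ | x i ≤ β (k-1)} := by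
        ext x
        simp only [Set.mem_setOf_eq, Set.mem_diff, not_le]
        tauto
      rw [hseteq, measure_diff hsub (hm i (β (k-1))).nullMeasurableSet (measure_ne_top _ _),
        ENNReal.toReal_sub_of_le (measure_mono hsub) (measure_ne_top _ _)]
    have hFb : ∀ k ≤ t, F k ≤ β k := by
      intro k hk
      have hβk1 : β k ≤ 1 := le_trans (hβmono k t hk le_rfl) hβ1
      have hβk0 : 0 ≤ β k := hβ0 ▸ hβmono 0 k (Nat.zero_le k) hk
      rcases eq_or_lt_of_le hβk0 with h0 | h0
      · have : μm {x : Fin t → ℝ | x i ≤ β k} = 0 := by rw [← h0]; exact hzero i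
        rw [hF]; simp only [this, ENNReal.toReal_zero]; exact hβk0
      rcases eq_or_lt_of_le hβk1 with h1 | h1
      · rw [hF]
        calc (μm {x : Fin t → ℝ | x i ≤ β k}).toReal ≤ (1:ℝ≥0∞).toReal :=
              ENNReal.toReal_mono ENNReal.one_ne_top prob_le_one
        _ = 1 := ENNReal.toReal_one
        _ = β k := h1.symm ▸ rfl
      · have := hν i (β k) ⟨h0, h1⟩
        calc F k ≤ (ENNReal.ofReal (β k)).toReal := ENNReal.toReal_mono ENNReal.ofReal_ne_top this
        _ = β k := ENNReal.toReal_ofReal hβk0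
    have habel := abel_aux c F β t ?_ ?_ hFb ?_
    · calc ∑ k ∈ Finset.Icc 1 t,
          ((k:ℝ))⁻¹ * (μm {x : Fin t → ℝ | β (k-1) < x i ∧ x i ≤ β k}).toReal
          = ∑ k ∈ Finset.Icc 1 t, c k * (F k - F (k-1)) := by
            refine Finset.sum_congr rfl fun k hk => ?_
            rw [Finset.mem_Icc] at hk
            rw [hdiff k (Finset.mem_Icc.mpr hk)]
            simp only [hc, if_neg (by omega : ¬ k = 0)]
      _ ≤ ∑ k ∈ Finset.Icc 1 t, c k * (β k - β (k-1)) - c t * (β t - F t) := habel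
      _ ≤ ∑ k ∈ Finset.Icc 1 t, c k * (β k - β (k-1)) := by
            have h3 : 0 ≤ c t := by simp only [hc]; split <;> positivity
            have h4 : F t ≤ β t := hFb t le_rfl
            nlinarith
      _ = ∑ k ∈ Finset.Icc 1 t, (β k - β (k-1)) / k := by
            refine Finset.sum_congr rfl fun k hk => ?_
            rw [Finset.mem_Icc] at hk
            simp only [hc, if_neg (by omega : ¬ k = 0)]
            rw [div_eq_inv_mul]
    · intro k hk
      simp only [hc]
      rcases Nat.eq_zero_or_pos k with h | h
      · subst h; norm_num
      · simp only [if_neg (by omega : ¬ k = 0), if_neg (by omega : ¬ k + 1 = 0)]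
        apply inv_anti₀
        · exact_mod_cast h
        · exact_mod_cast Nat.le_succ k
    · simp only [hc]; split <;> positivity
    · simp only [hF, hβ0]
      simp [hzero i]
  calc (μm C).toReal ≤ ∑ i : Fin t, ∑ k ∈ Finset.Icc 1 t,
      ((k:ℝ))⁻¹ * (μm {x : Fin t → ℝ | β (k-1) < x i ∧ x i ≤ β k}).toReal := h1
  _ ≤ ∑ _i : Fin t, ∑ k ∈ Finset.Icc 1 t, (β k - β (k-1)) / k :=
      Finset.sum_le_sum fun i _ => h2 i
  _ = t * ∑ k ∈ Finset.Icc 1 t, (β k - β (k-1)) / k := by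
      rw [Finset.sum_const, Finset.card_univ, Fintype.card_fin, nsmul_eq_mul]

/-- Remark 4.2 (Portmanteau-based asymptotic bound): if the laws `μs n` of a
sequence of random vectors live on `[0,1]^t` and every subsequence has a further
subsequence converging weakly to a limit whose coordinates satisfy the p-value
property, then `limsup_n P(X_n ∈ C) ≤ t·∑_{k=1}^t (β_k - β_{k-1})/k` for the
closed set `C = ⋃_{k=1}^t {x ∈ [0,1]^t : x_(k) ≤ β_k}`. -/
theorem stmt18 {t : ℕ} (μs : ℕ → ProbabilityMeasure (Fin t → ℝ))
    (hsupp : ∀ n, (μs n : Measure (Fin t → ℝ)) {x | ∀ i, x i ∈ Set.Icc (0 : ℝ) 1} = 1)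
    (htight : ∀ φ : ℕ → ℕ, StrictMono φ →
      ∃ ψ : ℕ → ℕ, StrictMono ψ ∧ ∃ ν : ProbabilityMeasure (Fin t → ℝ),
        Filter.Tendsto (fun n => μs (φ (ψ n))) Filter.atTop (nhds ν) ∧
        ∀ i : Fin t, ∀ u ∈ Set.Ioo (0 : ℝ) 1,
          (ν : Measure (Fin t → ℝ)) {x | x i ≤ u} ≤ ENNReal.ofReal u)
    (β : ℕ → ℝ) (hβ0 : β 0 = 0) (hβmono : ∀ i j, i ≤ j → j ≤ t → β i ≤ β j)
    (hβ1 : β t ≤ 1) :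
    Filter.limsup
      (fun n => ((μs n : Measure (Fin t → ℝ))
        {x | (∀ i, x i ∈ Set.Icc (0 : ℝ) 1) ∧ ∃ k ∈ Finset.Icc 1 t, orderStat x k ≤ β k}).toReal)
      Filter.atTop ≤
      t * ∑ k ∈ Finset.Icc 1 t, (β k - β (k - 1)) / k := by
  set C := {x : Fin t → ℝ | (∀ i, x i ∈ Set.Icc (0 : ℝ) 1) ∧
      ∃ k ∈ Finset.Icc 1 t, orderStat x k ≤ β k} with hCdef
  set R : ℝ := t * ∑ k ∈ Finset.Icc 1 t, (β k - β (k - 1)) / k with hR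
  set u : ℕ → ℝ := fun n => ((μs n : Measure (Fin t → ℝ)) C).toReal with hu
  have hR0 : 0 ≤ R := by
    apply mul_nonneg (Nat.cast_nonneg t)
    apply Finset.sum_nonneg
    intro k hk
    rw [Finset.mem_Icc] at hk
    apply div_nonneg _ (Nat.cast_nonneg k)
    have := hβmono (k-1) k (by omega) hk.2
    linarith
  by_contra hcon
  push_neg at hcon
  obtain ⟨R', hRR', hR'limsup⟩ := exists_between hcon
  have hcobdd : Filter.IsCoboundedUnder (· ≤ ·) Filter.atTop u :=
    Filter.isCoboundedUnder_le_of_le Filter.atTop (fun n => ENNReal.toReal_nonneg)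
  have hfreq : ∃ᶠ n in Filter.atTop, R' < u n :=
    Filter.frequently_lt_of_lt_limsup hcobdd hR'limsup
  obtain ⟨φ, hφmono, hφ⟩ := Filter.extraction_of_frequently_atTop hfreq
  obtain ⟨ψ, hψmono, ν, hconv, hν⟩ := htight φ hφmono
  have hport := ProbabilityMeasure.limsup_measure_closed_le_of_tendsto hconv (isClosed_C β)
  have hhom := hommel ν hν β hβ0 hβmono hβ1
  have hνC : (ν : Measure (Fin t → ℝ)) C ≤ ENNReal.ofReal R := by
    rw [← ENNReal.ofReal_toReal (measure_ne_top (ν : Measure (Fin t → ℝ)) C)]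
    exact ENNReal.ofReal_le_ofReal hhom
  have hlt : Filter.limsup (fun n => (μs (φ (ψ n)) : Measure (Fin t → ℝ)) C) Filter.atTop
      < ENNReal.ofReal R' :=
    lt_of_le_of_lt (hport.trans hνC)
      ((ENNReal.ofReal_lt_ofReal_iff (hR0.trans_lt hRR')).mpr hRR')
  have hev := Filter.eventually_lt_of_limsup_lt hlt
  obtain ⟨n, hn⟩ := hev.exists
  have : u (φ (ψ n)) < R' := by
    rw [hu]
    have := (ENNReal.lt_ofReal_iff_toReal_lt (measure_ne_top _ _)).mp hn
    exact this
  exact absurd (hφ (ψ n)) (not_lt.mpr this.le)
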